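/- Let A ∈ ℝ^{n×n}, B ∈ ℝ^{n×m}, U0 ∈ ℝ^{m×T}, X0 ∈ ℝ^{n×T}, X1 ∈ ℝ^{n×T} satisfy X1 = A·X0 + B·U0. Let Y ∈ ℝ^{T×n} be such that X1·Y + (X1·Y)ᵀ ≺ 0 and X0·Y is symmetric positive definite. Set S := (X0·Y)⁻¹ and K := U0·Y·S. Then S ≻ 0 and S·(A+B·K) + (A+B·K)ᵀ·S ≺ 0; in particular A+B·K admits a quadratic Lyapunov certificate of stability. -/

import Mathlib

open Matrix

lemma posDef_conj_of_isUnit {n : ℕ} {M C : Matrix (Fin n) (Fin n) ℝ}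
    (hM : M.PosDef) (hC : IsUnit C) : (Cᵀ * M * C).PosDef := by
  have hCdet : IsUnit C.det := (Matrix.isUnit_iff_isUnit_det C).mp hC
  have hps : (Cᵀ * M * C).PosSemidef := by
    simpa using hM.posSemidef.conjTranspose_mul_mul_same C
  refine Matrix.PosDef.of_dotProduct_mulVec_pos hps.1 fun x hx => ?_
  have hCx : C *ᵥ x ≠ 0 := by
    intro h
    apply hx
    have := congrArg (fun v => (C⁻¹) *ᵥ v) h
    simpa [Matrix.mulVec_mulVec, Matrix.nonsing_inv_mul _ hCdet] using this
  have := hM.dotProduct_mulVec_pos hCx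
  simpa only [star_trivial, ← Matrix.mulVec_mulVec, Matrix.dotProduct_mulVec (C *ᵥ x),
    Matrix.vecMul_transpose, Matrix.mul_assoc, Matrix.dotProduct_mulVec x,
    Matrix.vecMul_vecMul] using this

theorem stmt_3 (n m T : ℕ)
    (A : Matrix (Fin n) (Fin n) ℝ) (B : Matrix (Fin n) (Fin m) ℝ)
    (U0 : Matrix (Fin m) (Fin T) ℝ) (X0 X1 : Matrix (Fin n) (Fin T) ℝ)
    (hdata : X1 = A * X0 + B * U0)
    (Y : Matrix (Fin T) (Fin n) ℝ)
    (h1 : (-(X1 * Y + (X1 * Y)ᵀ)).PosDef)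
    (h2 : (X0 * Y).PosDef)
    (S : Matrix (Fin n) (Fin n) ℝ) (hSdef : S = (X0 * Y)⁻¹)
    (K : Matrix (Fin m) (Fin n) ℝ) (hKdef : K = U0 * Y * S) :
    S.PosDef ∧ (-(S * (A + B * K) + (A + B * K)ᵀ * S)).PosDef := by
  have hS : S.PosDef := hSdef ▸ h2.inv
  refine ⟨hS, ?_⟩
  set P := X0 * Y with hP
  have hPunit : IsUnit P.det := (Matrix.isUnit_iff_isUnit_det P).mp h2.isUnit
  have hSP : S * P = 1 := hSdef ▸ Matrix.nonsing_inv_mul P hPunit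
  have hPS : P * S = 1 := hSdef ▸ Matrix.mul_nonsing_inv P hPunit
  have hSsymm : Sᵀ = S := hS.isHermitian.eq
  have key : (A + B * K) * P = X1 * Y := by
    rw [hKdef, hdata]
    have h3 : B * (U0 * Y * S) * P = B * (U0 * Y) := by
      rw [Matrix.mul_assoc B (U0 * Y * S) P, Matrix.mul_assoc (U0 * Y) S P, hSP,
        Matrix.mul_one]
    rw [Matrix.add_mul, h3, Matrix.add_mul, Matrix.mul_assoc]
    rw [hP, Matrix.mul_assoc B U0 Y]
  have hABK : A + B * K = X1 * Y * S := by
    have := congrArg (· * S) key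
    simpa [Matrix.mul_assoc, hPS] using this
  have hexpr : -(S * (A + B * K) + (A + B * K)ᵀ * S)
      = Sᵀ * (-(X1 * Y + (X1 * Y)ᵀ)) * S := by
    rw [hABK, hSsymm]
    simp only [Matrix.transpose_mul, hSsymm, Matrix.neg_mul, Matrix.mul_neg,
      Matrix.add_mul, Matrix.mul_add]
    noncomm_ring
  rw [hexpr]
  exact posDef_conj_of_isUnit h1 hS.isUnit
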